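/- Let g ≥ 1, N ≥ 0 and n ≥ 0 be integers, let C ∈ ℝ, C' ≥ 0, and let Q ≥ 2 be a real number. Let G : ℝ → ℝ be a 1-periodic function and V a real trigonometric polynomial of degree at most N such that G(θ) ≤ V(θ) for every θ ∈ ℝ, V̂(0) = C/(N+1)^{n+1}, and |V̂(k)| ≤ C' for every integer k with 1 ≤ |k| ≤ N. Suppose θ_1, …, θ_{2g} ∈ ℝ satisfy |∑_{j=1}^{2g} e(k θ_j)| ≤ Q^{|k|/2} for every integer k with 1 ≤ |k| ≤ N. Then for every θ ∈ ℝ: ∑_{j=1}^{2g} G(θ − θ_j) ≤ 2g·C/(N+1)^{n+1} + 2N·C'·Q^{N/2}. -/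

import Mathlib

open Polynomial

noncomputable section

open scoped Classical

/-- `e(x) = e^{2πix}`. -/
def e2pi (x : ℝ) : ℂ := Complex.exp (2 * Real.pi * Complex.I * x)

/-- The sawtooth function `𝓑₁`. -/
noncomputable def sawtooth (x : ℝ) : ℝ :=
  if ∃ n : ℤ, x = (n : ℝ) then 0 else x - ⌊x⌋ - 1 / 2

/-- The Bernoulli periodic function `𝓑ₙ`. -/
noncomputable def bernoulliPeriodic (n : ℕ) (x : ℝ) : ℝ :=
  if n = 1 then sawtooth x else bernoulliFun n (Int.fract x)

/-- `Mₙ = max_{x ∈ [0,1]} Bₙ(x)`. -/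
def bernoulliMax (n : ℕ) : ℝ := sSup (bernoulliFun n '' Set.Icc (0 : ℝ) 1)

/-- `mₙ = min_{x ∈ [0,1]} Bₙ(x)`. -/
def bernoulliMin (n : ℕ) : ℝ := sInf (bernoulliFun n '' Set.Icc (0 : ℝ) 1)

/-- A real trigonometric polynomial of degree at most `N`. -/
def IsTrigPoly (N : ℕ) (T : ℝ → ℝ) : Prop :=
  ∃ a : ℤ → ℂ, ∀ θ : ℝ, (T θ : ℂ) = ∑ k ∈ Finset.Icc (-(N : ℤ)) (N : ℤ), a k * e2pi (k * θ)

/-- The `k`-th Fourier coefficient of a `1`-periodic function. -/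
def fourierCoeff' (f : ℝ → ℝ) (k : ℤ) : ℂ := ∫ θ in (0:ℝ)..1, (f θ : ℂ) * e2pi (-(k * θ))

/-- The normalized periodic indicator function of the interval `[α, β]`. -/
noncomputable def periodicIndicator (α β θ : ℝ) : ℝ :=
  if ∃ n : ℤ, θ + (n : ℝ) ∈ Set.Ioo α β then 1
  else if ∃ n : ℤ, θ + (n : ℝ) = α ∨ θ + (n : ℝ) = β then 1 / 2
  else 0

variable (F : Type) [Field F] [Fintype F]

/-- The quadratic residue symbol `(f/P)` modulo a prime polynomial `P`. -/
noncomputable def quadResSymbol (P f : Polynomial F) : ℤ :=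
  if P ∣ f then 0 else if ∃ g : Polynomial F, P ∣ (g ^ 2 - f) then 1 else -1

/-- `χ` is the quadratic character `χ_D`: completely multiplicative on monic polynomials,
with `χ(Q) = (D/Q)` for every prime polynomial `Q`. -/
def IsQuadCharOf (D : Polynomial F) (χ : Polynomial F → ℝ) : Prop :=
  χ 1 = 1 ∧
  (∀ f h : Polynomial F, f.Monic → h.Monic → χ (f * h) = χ f * χ h) ∧
  ∀ Q : Polynomial F, Q.Monic → Irreducible Q → χ Q = (quadResSymbol F Q D : ℝ)

/-- `c_k = ∑_{f monic, deg f = k} χ(f)`. -/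
def coeffSum (χ : Polynomial F → ℝ) (k : ℕ) : ℝ :=
  ∑ᶠ f ∈ {f : Polynomial F | f.Monic ∧ f.natDegree = k}, χ f

/-- The von Mangoldt function for monic polynomials. -/
noncomputable def polyVonMangoldt (f : Polynomial F) : ℝ :=
  if h : ∃ P : Polynomial F, (P.Monic ∧ Irreducible P) ∧ ∃ m : ℕ, 1 ≤ m ∧ f = P ^ m
  then ((Classical.choose h).natDegree : ℝ) else 0

/-- The factorization of `𝓛(u, χ_D) = ∑ c_k u^k` over its zeros `q^{-1/2} e(θⱼ)`. -/
def LFactorization (χ : Polynomial F → ℝ) (g : ℕ) (θz : Fin (2 * g) → ℝ) : Prop :=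
  ∀ u : ℂ, ‖u‖ < 1 / (Fintype.card F : ℝ) →
    HasSum (fun k : ℕ => (coeffSum F χ k : ℂ) * u ^ k)
      (∏ j : Fin (2 * g), (1 - u * (Real.sqrt (Fintype.card F) : ℂ) * e2pi (-(θz j))))



lemma e2pi_add (x y : ℝ) : e2pi (x + y) = e2pi x * e2pi y := by
  simp only [e2pi, Complex.ofReal_add, ← Complex.exp_add]
  ring_nf

lemma e2pi_zero : e2pi 0 = 1 := by simp [e2pi]

lemma e2pi_norm (x : ℝ) : ‖e2pi x‖ = 1 := by
  simp only [e2pi, Complex.norm_exp]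
  have : (2 * ↑Real.pi * Complex.I * ↑x).re = 0 := by
    simp [Complex.mul_re, Complex.mul_im]
  simp [this]

lemma e2pi_cont : Continuous fun θ : ℝ => e2pi θ := by
  unfold e2pi
  exact Complex.continuous_exp.comp (by continuity)

lemma integral_e2pi (m : ℤ) :
    (∫ θ in (0:ℝ)..1, e2pi (m * θ)) = if m = 0 then 1 else 0 := by
  split_ifs with h
  · simp [h, e2pi]
  · have hc : (2 * (Real.pi:ℂ) * Complex.I * m) ≠ 0 := by
      simp [Real.pi_ne_zero, Complex.I_ne_zero, h]
    have : ∀ θ : ℝ, e2pi (m * θ) = Complex.exp ((2 * (Real.pi:ℂ) * Complex.I * m) * θ) := by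
      intro θ; simp [e2pi]; ring_nf
    rw [intervalIntegral.integral_congr (fun θ _ => this θ), integral_exp_mul_complex hc]
    have h1 : Complex.exp (2 * (Real.pi:ℂ) * Complex.I * m * (1:ℝ)) = 1 := by
      rw [show (2 * (Real.pi:ℂ) * Complex.I * m * (1:ℝ)) = m * (2 * Real.pi * Complex.I) by
        push_cast; ring]
      exact Complex.exp_int_mul_two_pi_mul_I m
    rw [h1]
    simp

lemma trig_coeff {N : ℕ} {V : ℝ → ℝ} {a : ℤ → ℂ}
    (ha : ∀ θ : ℝ, (V θ : ℂ) = ∑ j ∈ Finset.Icc (-(N : ℤ)) (N : ℤ), a j * e2pi (j * θ))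
    {k : ℤ} (hk : k ∈ Finset.Icc (-(N : ℤ)) (N : ℤ)) :
    fourierCoeff' V k = a k := by
  unfold fourierCoeff'
  have hpt : ∀ θ : ℝ, (V θ : ℂ) * e2pi (-((k : ℝ) * θ)) =
      ∑ j ∈ Finset.Icc (-(N : ℤ)) (N : ℤ), a j * e2pi (((j - k : ℤ) : ℝ) * θ) := by
    intro θ
    rw [ha θ, Finset.sum_mul]
    refine Finset.sum_congr rfl fun j _ => ?_
    rw [mul_assoc, ← e2pi_add]
    congr 1
    push_cast
    ring
  rw [intervalIntegral.integral_congr (fun θ _ => hpt θ)]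
  rw [intervalIntegral.integral_finset_sum]
  · have : ∀ j ∈ Finset.Icc (-(N : ℤ)) (N : ℤ),
        (∫ θ in (0:ℝ)..1, a j * e2pi (((j - k : ℤ) : ℝ) * θ)) =
        if j = k then a j else 0 := by
      intro j _
      rw [intervalIntegral.integral_const_mul, integral_e2pi (j - k)]
      simp [sub_eq_zero]
    rw [Finset.sum_congr rfl this, Finset.sum_ite_eq' _ k, if_pos hk]
  · intro j _
    exact (Continuous.intervalIntegrable (by
      exact continuous_const.mul (e2pi_cont.comp (continuous_const.mul continuous_id))) 0 1)

/-- the unified estimate bounding a sum of translates of a periodic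
function via a one-sided trigonometric approximant. -/
theorem statement17 (g N n : ℕ) (hg : 1 ≤ g) (C C' Q : ℝ) (hC' : 0 ≤ C') (hQ : 2 ≤ Q)
    (G : ℝ → ℝ) (hGper : ∀ θ : ℝ, G (θ + 1) = G θ)
    (V : ℝ → ℝ) (hV : IsTrigPoly N V)
    (hmaj : ∀ θ : ℝ, G θ ≤ V θ)
    (hV0 : fourierCoeff' V 0 = ((C / (N + 1) ^ (n + 1) : ℝ) : ℂ))
    (hVk : ∀ k : ℤ, 1 ≤ |k| → |k| ≤ (N : ℤ) → ‖fourierCoeff' V k‖ ≤ C')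
    (θz : Fin (2 * g) → ℝ)
    (hzeros : ∀ k : ℤ, 1 ≤ |k| → |k| ≤ (N : ℤ) →
      ‖∑ j : Fin (2 * g), e2pi ((k : ℝ) * θz j)‖ ≤ Q ^ (|(k : ℝ)| / 2)) :
    ∀ θ : ℝ, ∑ j : Fin (2 * g), G (θ - θz j)
      ≤ 2 * (g : ℝ) * C / (N + 1) ^ (n + 1) + 2 * (N : ℝ) * C' * Q ^ ((N : ℝ) / 2) := by
  intro θ
  obtain ⟨a, ha⟩ := hV
  set K := Finset.Icc (-(N : ℤ)) (N : ℤ) with hK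
  have hcoeff : ∀ k ∈ K, fourierCoeff' V k = a k := fun k hk => trig_coeff ha hk
  have h0K : (0 : ℤ) ∈ K := by simp [hK]
  set f : ℤ → ℂ := fun k =>
    a k * e2pi ((k : ℝ) * θ) * ∑ j : Fin (2 * g), e2pi (((-k : ℤ) : ℝ) * θz j) with hf
  have key : ((∑ j : Fin (2 * g), V (θ - θz j) : ℝ) : ℂ) = ∑ k ∈ K, f k := by
    push_cast
    calc (∑ j : Fin (2 * g), (V (θ - θz j) : ℂ))
        = ∑ j : Fin (2 * g), ∑ k ∈ K, a k * e2pi ((k : ℝ) * (θ - θz j)) :=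
          Finset.sum_congr rfl fun j _ => ha _
      _ = ∑ k ∈ K, ∑ j : Fin (2 * g), a k * e2pi ((k : ℝ) * (θ - θz j)) := Finset.sum_comm
      _ = ∑ k ∈ K, f k := by
          refine Finset.sum_congr rfl fun k _ => ?_
          rw [hf]
          simp only
          rw [Finset.mul_sum]
          refine Finset.sum_congr rfl fun j _ => ?_
          rw [mul_assoc, ← e2pi_add]
          congr 2
          push_cast
          ring
  have hsum : ∑ j : Fin (2 * g), V (θ - θz j) = (∑ k ∈ K, f k).re := by
    rw [← key, Complex.ofReal_re]
  have hsplit : ∑ k ∈ K, f k = f 0 + ∑ k ∈ K.erase 0, f k :=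
    (Finset.add_sum_erase _ f h0K).symm
  have ha0 : a 0 = ((C / (N + 1) ^ (n + 1) : ℝ) : ℂ) := by rw [← hcoeff 0 h0K, hV0]
  have hf0 : f 0 = ((2 * (g : ℝ) * C / (N + 1) ^ (n + 1) : ℝ) : ℂ) := by
    rw [hf]
    simp only [ha0, Int.cast_zero, zero_mul, e2pi_zero, neg_zero, Finset.sum_const,
      Finset.card_univ, Fintype.card_fin, nsmul_eq_mul, mul_one]
    push_cast
    ring
  have hbound : ∀ k ∈ K.erase 0, ‖f k‖ ≤ C' * Q ^ ((N : ℝ) / 2) := by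
    intro k hk
    obtain ⟨hk0, hkK⟩ := Finset.mem_erase.1 hk
    have hkK' := hkK
    rw [hK, Finset.mem_Icc] at hkK'
    have habs : |k| ≤ (N : ℤ) := abs_le.2 hkK'
    have h1 : 1 ≤ |k| := Int.one_le_abs (by exact hk0)
    have hQ1 : (1 : ℝ) ≤ Q := le_trans one_le_two hQ
    have hZ : ‖∑ j : Fin (2 * g), e2pi (((-k : ℤ) : ℝ) * θz j)‖ ≤ Q ^ ((N : ℝ) / 2) := by
      refine le_trans (hzeros (-k) (by rwa [abs_neg]) (by rwa [abs_neg])) ?_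
      refine Real.rpow_le_rpow_of_exponent_le hQ1 ?_
      have : |((-k : ℤ) : ℝ)| ≤ (N : ℝ) := by
        rw [← Int.cast_abs]
        exact_mod_cast (abs_neg k).le.trans habs
      linarith
    have hak : ‖a k‖ ≤ C' := by
      rw [← hcoeff k hkK]
      exact hVk k h1 habs
    calc ‖f k‖ = ‖a k‖ * ‖∑ j : Fin (2 * g), e2pi (((-k : ℤ) : ℝ) * θz j)‖ := by
          rw [hf]; simp only [norm_mul, e2pi_norm, mul_one]
      _ ≤ C' * Q ^ ((N : ℝ) / 2) := by
          apply mul_le_mul hak hZ (norm_nonneg _)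
          exact hC'
  have hcard : (K.erase 0).card = 2 * N := by
    rw [Finset.card_erase_of_mem h0K, hK, Int.card_Icc]
    omega
  have hrest : (∑ k ∈ K.erase 0, f k).re ≤ 2 * (N : ℝ) * C' * Q ^ ((N : ℝ) / 2) := by
    refine le_trans (Complex.re_le_norm _) ?_
    refine le_trans (norm_sum_le _ _) ?_
    refine le_trans (Finset.sum_le_card_nsmul _ _ _ hbound) ?_
    rw [hcard, nsmul_eq_mul]
    push_cast
    ring_nf
    exact le_refl _
  have hGV : ∑ j : Fin (2 * g), G (θ - θz j) ≤ ∑ j : Fin (2 * g), V (θ - θz j) :=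
    Finset.sum_le_sum fun j _ => hmaj _
  have hf0re : (f 0).re = 2 * (g : ℝ) * C / (N + 1) ^ (n + 1) := by
    rw [hf0, Complex.ofReal_re]
  calc ∑ j : Fin (2 * g), G (θ - θz j) ≤ ∑ j : Fin (2 * g), V (θ - θz j) := hGV
    _ = (∑ k ∈ K, f k).re := hsum
    _ = (f 0).re + (∑ k ∈ K.erase 0, f k).re := by rw [hsplit, Complex.add_re]
    _ ≤ 2 * (g : ℝ) * C / (N + 1) ^ (n + 1) + 2 * (N : ℝ) * C' * Q ^ ((N : ℝ) / 2) := by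
        rw [hf0re]
        exact add_le_add_right hrest _


end
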